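/- arXiv:1603.01215 — 5 statements merged into one kernel-verified Lean document; each statement's English description precedes it below -/
import Mathlib

section
/- Let 𝓕 be a nonempty family of subsets of a nonempty finite set S. Then ∑_{(A,B)∈𝓕²} |A ⊗ B| = ∑_{(A,B)∈𝓕²} |A ⊕ B| + ∑_{x∈S} δ_x², where the sums over pairs range over all ordered pairs of members of 𝓕. -/
theorem stmt_0 {α : Type*} [DecidableEq α] (S : Finset α) (hS : S.Nonempty)
    (𝓕 : Finset (Finset α)) (h𝓕 : 𝓕.Nonempty) (hsub : ∀ A ∈ 𝓕, A ⊆ S) :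
    (∑ A ∈ 𝓕, ∑ B ∈ 𝓕, ((S \ ((A \ B) ∪ (B \ A))).card : ℤ)) =
      (∑ A ∈ 𝓕, ∑ B ∈ 𝓕, (((A \ B) ∪ (B \ A)).card : ℤ)) +
      ∑ x ∈ S, (((𝓕.filter (fun A => x ∈ A)).card : ℤ) -
        ((𝓕.card : ℤ) - ((𝓕.filter (fun A => x ∈ A)).card : ℤ))) ^ 2 := by
  classical
  have hcard : ∀ T : Finset α, T ⊆ S →
      (T.card : ℤ) = ∑ x ∈ S, (if x ∈ T then (1:ℤ) else 0) := by
    intro T hT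
    rw [Finset.sum_boole, Finset.filter_mem_eq_inter, Finset.inter_eq_right.mpr hT]
  have h1 : ∀ A ∈ 𝓕, ∀ B ∈ 𝓕,
      ((S \ ((A \ B) ∪ (B \ A))).card : ℤ) =
        ∑ x ∈ S, (if x ∈ S \ ((A \ B) ∪ (B \ A)) then (1:ℤ) else 0) :=
    fun A _ B _ => hcard _ (Finset.sdiff_subset)
  have h2 : ∀ A ∈ 𝓕, ∀ B ∈ 𝓕,
      ((((A \ B) ∪ (B \ A))).card : ℤ) =
        ∑ x ∈ S, (if x ∈ (A \ B) ∪ (B \ A) then (1:ℤ) else 0) := by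
    intro A hA B hB
    exact hcard _ (Finset.union_subset (Finset.sdiff_subset.trans (hsub A hA))
      (Finset.sdiff_subset.trans (hsub B hB)))
  calc (∑ A ∈ 𝓕, ∑ B ∈ 𝓕, ((S \ ((A \ B) ∪ (B \ A))).card : ℤ))
      = ∑ x ∈ S, ∑ A ∈ 𝓕, ∑ B ∈ 𝓕,
          (if x ∈ S \ ((A \ B) ∪ (B \ A)) then (1:ℤ) else 0) := by
        rw [Finset.sum_congr rfl fun A hA => Finset.sum_congr rfl fun B hB => h1 A hA B hB,
          Finset.sum_congr rfl fun A (_ : A ∈ 𝓕) => Finset.sum_comm, Finset.sum_comm]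
    _ = ∑ x ∈ S, ((∑ A ∈ 𝓕, ∑ B ∈ 𝓕,
          (if x ∈ (A \ B) ∪ (B \ A) then (1:ℤ) else 0)) +
          (((𝓕.filter (fun A => x ∈ A)).card : ℤ) -
            ((𝓕.card : ℤ) - ((𝓕.filter (fun A => x ∈ A)).card : ℤ))) ^ 2) := by
        refine Finset.sum_congr rfl fun x hx => ?_
        set p : ℤ := ((𝓕.filter (fun A => x ∈ A)).card : ℤ) with hpdef
        set m : ℤ := ((𝓕.card : ℤ)) with hmdef
        have hp : (∑ A ∈ 𝓕, (if x ∈ A then (1:ℤ) else 0)) = p := by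
          rw [hpdef, Finset.sum_boole]
        have hind : ∀ A B : Finset α,
            (if x ∈ (A \ B) ∪ (B \ A) then (1:ℤ) else 0) =
            (if x ∈ A then (1:ℤ) else 0) + (if x ∈ B then (1:ℤ) else 0)
              - 2 * ((if x ∈ A then (1:ℤ) else 0) * (if x ∈ B then (1:ℤ) else 0)) := by
          intro A B
          by_cases hA : x ∈ A <;> by_cases hB : x ∈ B <;> simp [hA, hB]
        have hind' : ∀ A B : Finset α,
            (if x ∈ S \ ((A \ B) ∪ (B \ A)) then (1:ℤ) else 0) =
            1 - (if x ∈ (A \ B) ∪ (B \ A) then (1:ℤ) else 0) := by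
          intro A B
          by_cases h : x ∈ (A \ B) ∪ (B \ A) <;> simp [h, hx]
        have hinner : ∀ A : Finset α,
            (∑ B ∈ 𝓕, (if x ∈ (A \ B) ∪ (B \ A) then (1:ℤ) else 0)) =
            m * (if x ∈ A then (1:ℤ) else 0) + p
              - 2 * ((if x ∈ A then (1:ℤ) else 0) * p) := by
          intro A
          simp only [hind]
          rw [Finset.sum_sub_distrib, Finset.sum_add_distrib, Finset.sum_const, hp,
            ← Finset.mul_sum, ← Finset.mul_sum, hp]
          push_cast [hmdef]
          ring
        have hxor : (∑ A ∈ 𝓕, ∑ B ∈ 𝓕, (if x ∈ (A \ B) ∪ (B \ A) then (1:ℤ) else 0))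
            = 2 * p * (m - p) := by
          rw [Finset.sum_congr rfl fun A _ => hinner A]
          rw [Finset.sum_sub_distrib, Finset.sum_add_distrib, Finset.sum_const,
            ← Finset.mul_sum, hp, ← Finset.mul_sum, ← Finset.sum_mul, hp]
          push_cast [hmdef]
          ring
        have hcomp : (∑ A ∈ 𝓕, ∑ B ∈ 𝓕,
            (if x ∈ S \ ((A \ B) ∪ (B \ A)) then (1:ℤ) else 0)) = m * m - 2 * p * (m - p) := by
          simp only [hind']
          rw [Finset.sum_congr rfl fun A _ =>
            (Finset.sum_sub_distrib (s := 𝓕) _ _), Finset.sum_sub_distrib, hxor]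
          simp [hmdef, mul_comm]
        rw [hcomp, hxor]
        ring
    _ = _ := by
        rw [Finset.sum_add_distrib]
        congr 1
        rw [Finset.sum_congr rfl fun A hA => Finset.sum_congr rfl fun B hB => h2 A hA B hB,
          Finset.sum_congr rfl fun A (_ : A ∈ 𝓕) => Finset.sum_comm, Finset.sum_comm]
end

section
/- Let 𝓕 be a nonempty family of subsets of a nonempty finite set S. Then ∑_{(A,B)∈𝓕²} |A ⊗ B| ≥ ∑_{(A,B)∈𝓕²} |A ⊕ B|, where the sums range over all ordered pairs of members of 𝓕. -/
private lemma card_as_sum {α : Type*} [DecidableEq α] {S T : Finset α} (h : T ⊆ S) :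
    T.card = ∑ x ∈ S, if x ∈ T then 1 else 0 := by
  rw [← Finset.card_filter, Finset.filter_mem_eq_inter, Finset.inter_eq_right.2 h]

theorem stmt_1 {α : Type*} [DecidableEq α] (S : Finset α) (hS : S.Nonempty)
    (𝓕 : Finset (Finset α)) (h𝓕 : 𝓕.Nonempty) (hsub : ∀ A ∈ 𝓕, A ⊆ S) :
    (∑ A ∈ 𝓕, ∑ B ∈ 𝓕, (S \ ((A \ B) ∪ (B \ A))).card) ≥
      ∑ A ∈ 𝓕, ∑ B ∈ 𝓕, ((A \ B) ∪ (B \ A)).card := by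
  have hΔ : ∀ A ∈ 𝓕, ∀ B ∈ 𝓕, ((A \ B) ∪ (B \ A)) ⊆ S := by
    intro A hA B hB
    exact Finset.union_subset ((Finset.sdiff_subset).trans (hsub A hA))
      ((Finset.sdiff_subset).trans (hsub B hB))
  have rw1 : (∑ A ∈ 𝓕, ∑ B ∈ 𝓕, (S \ ((A \ B) ∪ (B \ A))).card)
      = ∑ x ∈ S, ∑ A ∈ 𝓕, ∑ B ∈ 𝓕, (if x ∈ S \ ((A \ B) ∪ (B \ A)) then 1 else 0) := by
    calc ∑ A ∈ 𝓕, ∑ B ∈ 𝓕, (S \ ((A \ B) ∪ (B \ A))).card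
        = ∑ A ∈ 𝓕, ∑ B ∈ 𝓕, ∑ x ∈ S, (if x ∈ S \ ((A \ B) ∪ (B \ A)) then 1 else 0) :=
          Finset.sum_congr rfl fun A _ => Finset.sum_congr rfl fun B _ =>
            card_as_sum Finset.sdiff_subset
      _ = ∑ A ∈ 𝓕, ∑ x ∈ S, ∑ B ∈ 𝓕, (if x ∈ S \ ((A \ B) ∪ (B \ A)) then 1 else 0) :=
          Finset.sum_congr rfl fun A _ => Finset.sum_comm
      _ = ∑ x ∈ S, ∑ A ∈ 𝓕, ∑ B ∈ 𝓕, (if x ∈ S \ ((A \ B) ∪ (B \ A)) then 1 else 0) :=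
          Finset.sum_comm
  have rw2 : (∑ A ∈ 𝓕, ∑ B ∈ 𝓕, ((A \ B) ∪ (B \ A)).card)
      = ∑ x ∈ S, ∑ A ∈ 𝓕, ∑ B ∈ 𝓕, (if x ∈ (A \ B) ∪ (B \ A) then 1 else 0) := by
    calc ∑ A ∈ 𝓕, ∑ B ∈ 𝓕, ((A \ B) ∪ (B \ A)).card
        = ∑ A ∈ 𝓕, ∑ B ∈ 𝓕, ∑ x ∈ S, (if x ∈ (A \ B) ∪ (B \ A) then 1 else 0) :=
          Finset.sum_congr rfl fun A hA => Finset.sum_congr rfl fun B hB =>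
            card_as_sum (hΔ A hA B hB)
      _ = ∑ A ∈ 𝓕, ∑ x ∈ S, ∑ B ∈ 𝓕, (if x ∈ (A \ B) ∪ (B \ A) then 1 else 0) :=
          Finset.sum_congr rfl fun A _ => Finset.sum_comm
      _ = ∑ x ∈ S, ∑ A ∈ 𝓕, ∑ B ∈ 𝓕, (if x ∈ (A \ B) ∪ (B \ A) then 1 else 0) :=
          Finset.sum_comm
  rw [rw1, rw2]
  refine Finset.sum_le_sum fun x hx => ?_
  set k := (𝓕.filter (fun A => x ∈ A)).card with hk
  set m := (𝓕.filter (fun A => x ∉ A)).card with hm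
  have memΔ : ∀ A B : Finset α, (x ∈ (A \ B) ∪ (B \ A)) ↔ ¬ ((x ∈ A) ↔ (x ∈ B)) := by
    intro A B
    simp only [Finset.mem_union, Finset.mem_sdiff]
    tauto
  have inner1 : ∀ A : Finset α,
      (∑ B ∈ 𝓕, (if x ∈ (A \ B) ∪ (B \ A) then 1 else 0)) = if x ∈ A then m else k := by
    intro A
    by_cases hA : x ∈ A
    · simp only [hA, if_true]
      rw [hm, Finset.card_filter]
      refine Finset.sum_congr rfl fun B hB => ?_
      simp [memΔ, hA]
    · simp only [hA, if_false]
      rw [hk, Finset.card_filter]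
      refine Finset.sum_congr rfl fun B hB => ?_
      simp [memΔ, hA]
  have inner2 : ∀ A : Finset α,
      (∑ B ∈ 𝓕, (if x ∈ S \ ((A \ B) ∪ (B \ A)) then 1 else 0)) = if x ∈ A then k else m := by
    intro A
    by_cases hA : x ∈ A
    · simp only [hA, if_true]
      rw [hk, Finset.card_filter]
      refine Finset.sum_congr rfl fun B hB => ?_
      simp only [Finset.mem_sdiff, hx, true_and, memΔ, hA]
      by_cases hB : x ∈ B <;> simp [hB]
    · simp only [hA, if_false]
      rw [hm, Finset.card_filter]
      refine Finset.sum_congr rfl fun B hB => ?_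
      simp only [Finset.mem_sdiff, hx, true_and, memΔ, hA]
      by_cases hB : x ∈ B <;> simp [hB]
  simp only [inner1, inner2]
  rw [Finset.sum_ite, Finset.sum_ite]
  simp only [Finset.sum_const, smul_eq_mul, mul_one]
  have : (𝓕.filter (fun A => ¬ x ∈ A)).card = m := rfl
  rw [this]
  -- goal : k * m + m * k ≤ k * k + m * m  (roughly)
  rcases le_total k m with h | h <;> nlinarith
end

section
/- Let 𝓕 be a nonempty family of subsets of a nonempty finite set S. Then ∑_{(A,B)∈𝓕²} |A ⊗ B| = ∑_{(A,B)∈𝓕²} |A ⊕ B| holds if and only if every x ∈ S belongs to exactly half of the members of 𝓕, i.e. 2|𝓕_x| = |𝓕| for all x ∈ S. -/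
theorem stmt_2 {α : Type*} [DecidableEq α] (S : Finset α) (hS : S.Nonempty)
    (𝓕 : Finset (Finset α)) (h𝓕 : 𝓕.Nonempty) (hsub : ∀ A ∈ 𝓕, A ⊆ S) :
    (∑ A ∈ 𝓕, ∑ B ∈ 𝓕, (S \ ((A \ B) ∪ (B \ A))).card) =
      (∑ A ∈ 𝓕, ∑ B ∈ 𝓕, ((A \ B) ∪ (B \ A)).card) ↔
    ∀ x ∈ S, 2 * (𝓕.filter (fun A => x ∈ A)).card = 𝓕.card := by
  classical
  set n := 𝓕.card with hn
  set f : α → ℕ := fun x => (𝓕.filter (fun A => x ∈ A)).card with hf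
  set g : α → ℕ := fun x => (𝓕.filter (fun A => x ∉ A)).card with hg
  have hfg : ∀ x : α, f x + g x = n := fun x =>
    Finset.card_filter_add_card_filter_not _
  have hsumf : ∀ x : α, (∑ A ∈ 𝓕, (if x ∈ A then (1:ℕ) else 0)) = f x := by
    intro x
    exact (Finset.card_filter _ _).symm
  have hsumg : ∀ x : α, (∑ A ∈ 𝓕, (if x ∈ A then (0:ℕ) else 1)) = g x := by
    intro x
    have : ∀ A : Finset α, (if x ∈ A then (0:ℕ) else 1) = if x ∉ A then 1 else 0 := by
      intro A; by_cases h : x ∈ A <;> simp [h]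
    rw [Finset.sum_congr rfl fun A _ => this A]
    exact (Finset.card_filter _ _).symm
  have swap : ∀ (h : Finset α → Finset α → α → ℕ),
      (∑ A ∈ 𝓕, ∑ B ∈ 𝓕, ∑ x ∈ S, h A B x) = ∑ x ∈ S, ∑ A ∈ 𝓕, ∑ B ∈ 𝓕, h A B x := by
    intro h
    calc (∑ A ∈ 𝓕, ∑ B ∈ 𝓕, ∑ x ∈ S, h A B x)
        = ∑ A ∈ 𝓕, ∑ x ∈ S, ∑ B ∈ 𝓕, h A B x :=
          Finset.sum_congr rfl fun A _ => Finset.sum_comm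
      _ = ∑ x ∈ S, ∑ A ∈ 𝓕, ∑ B ∈ 𝓕, h A B x := Finset.sum_comm
  -- symmetric difference sum
  have hR : (∑ A ∈ 𝓕, ∑ B ∈ 𝓕, ((A \ B) ∪ (B \ A)).card)
      = ∑ x ∈ S, (f x * g x + g x * f x) := by
    have step1 : ∀ A ∈ 𝓕, ∀ B ∈ 𝓕, ((A \ B) ∪ (B \ A)).card
        = ∑ x ∈ S, (if x ∈ A then (if x ∈ B then (0:ℕ) else 1)
            else (if x ∈ B then 1 else 0)) := by
      intro A hA B hB
      have hsub' : (A \ B) ∪ (B \ A) ⊆ S := by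
        intro x hx
        rcases Finset.mem_union.mp hx with h | h
        · exact hsub A hA (Finset.mem_sdiff.mp h).1
        · exact hsub B hB (Finset.mem_sdiff.mp h).1
      have : ((A \ B) ∪ (B \ A)).card = (S.filter (fun x => x ∈ (A \ B) ∪ (B \ A))).card := by
        congr 1
        rw [Finset.filter_mem_eq_inter, Finset.inter_eq_right.mpr hsub']
      rw [this, Finset.card_filter]
      apply Finset.sum_congr rfl
      intro x _
      by_cases hA' : x ∈ A <;> by_cases hB' : x ∈ B <;> simp [hA', hB']
    calc (∑ A ∈ 𝓕, ∑ B ∈ 𝓕, ((A \ B) ∪ (B \ A)).card)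
        = ∑ A ∈ 𝓕, ∑ B ∈ 𝓕, ∑ x ∈ S, (if x ∈ A then (if x ∈ B then (0:ℕ) else 1)
            else (if x ∈ B then 1 else 0)) := by
          apply Finset.sum_congr rfl; intro A hA
          exact Finset.sum_congr rfl fun B hB => step1 A hA B hB
      _ = ∑ x ∈ S, ∑ A ∈ 𝓕, ∑ B ∈ 𝓕, (if x ∈ A then (if x ∈ B then (0:ℕ) else 1)
            else (if x ∈ B then 1 else 0)) := swap _
      _ = ∑ x ∈ S, (f x * g x + g x * f x) := by
          apply Finset.sum_congr rfl
          intro x _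
          have inner : ∀ A : Finset α, (∑ B ∈ 𝓕, (if x ∈ A then (if x ∈ B then (0:ℕ) else 1)
              else (if x ∈ B then 1 else 0))) = if x ∈ A then g x else f x := by
            intro A
            by_cases hA' : x ∈ A <;> simp [hA', hsumf x, hsumg x]
          rw [Finset.sum_congr rfl fun A _ => inner A]
          rw [Finset.sum_ite, Finset.sum_const, Finset.sum_const]
          simp [smul_eq_mul]
          rfl
  -- complement sum
  have hL : (∑ A ∈ 𝓕, ∑ B ∈ 𝓕, (S \ ((A \ B) ∪ (B \ A))).card)
      = ∑ x ∈ S, (f x * f x + g x * g x) := by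
    have step1 : ∀ A ∈ 𝓕, ∀ B ∈ 𝓕, (S \ ((A \ B) ∪ (B \ A))).card
        = ∑ x ∈ S, (if x ∈ A then (if x ∈ B then (1:ℕ) else 0)
            else (if x ∈ B then 0 else 1)) := by
      intro A hA B hB
      rw [Finset.sdiff_eq_filter, Finset.card_filter]
      apply Finset.sum_congr rfl
      intro x _
      by_cases hA' : x ∈ A <;> by_cases hB' : x ∈ B <;> simp [hA', hB']
    calc (∑ A ∈ 𝓕, ∑ B ∈ 𝓕, (S \ ((A \ B) ∪ (B \ A))).card)
        = ∑ A ∈ 𝓕, ∑ B ∈ 𝓕, ∑ x ∈ S, (if x ∈ A then (if x ∈ B then (1:ℕ) else 0)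
            else (if x ∈ B then 0 else 1)) := by
          apply Finset.sum_congr rfl; intro A hA
          exact Finset.sum_congr rfl fun B hB => step1 A hA B hB
      _ = ∑ x ∈ S, ∑ A ∈ 𝓕, ∑ B ∈ 𝓕, (if x ∈ A then (if x ∈ B then (1:ℕ) else 0)
            else (if x ∈ B then 0 else 1)) := swap _
      _ = ∑ x ∈ S, (f x * f x + g x * g x) := by
          apply Finset.sum_congr rfl
          intro x _
          have inner : ∀ A : Finset α, (∑ B ∈ 𝓕, (if x ∈ A then (if x ∈ B then (1:ℕ) else 0)
              else (if x ∈ B then 0 else 1))) = if x ∈ A then f x else g x := by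
            intro A
            by_cases hA' : x ∈ A <;> simp [hA', hsumf x, hsumg x]
          rw [Finset.sum_congr rfl fun A _ => inner A]
          rw [Finset.sum_ite, Finset.sum_const, Finset.sum_const]
          simp [smul_eq_mul]
          rfl
  rw [hL, hR]
  have hle : ∀ x ∈ S, f x * g x + g x * f x ≤ f x * f x + g x * g x := by
    intro x _
    nlinarith [two_mul_le_add_sq (f x) (g x), sq_nonneg (f x), sq_nonneg (g x)]
  rw [eq_comm, Finset.sum_eq_sum_iff_of_le hle]
  constructor
  · intro h x hx
    have hx' := h x hx
    have hfgx : (f x : ℤ) = g x := by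
      have h2 : ((f x : ℤ) - g x) ^ 2 = 0 := by
        have hc : (f x * g x + g x * f x : ℤ) = f x * f x + g x * g x := by exact_mod_cast hx'
        linear_combination -hc
      have := sq_eq_zero_iff.mp h2
      linarith
    have heq : f x = g x := by exact_mod_cast hfgx
    have hn' := hfg x
    show 2 * f x = n
    omega
  · intro h x hx
    have h1 : 2 * f x = n := h x hx
    have h2 := hfg x
    have : f x = g x := by omega
    rw [this]
end

section
/- There exists a nonempty finite set S and a reduced union-closed family 𝓕 on S such that 2 ∑_{A∈𝓕} |A| < |𝓕| · |S|, i.e. the average cardinality of members of 𝓕 is strictly less than half the cardinality of S. (An example is the family {∅, {a}, {b}, {a,b}, {a,b,c}} on S = {a,b,c}.) -/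
/-- `𝓕` is a reduced union-closed family on `S`. -/
def ReducedUnionClosed {α : Type*} [DecidableEq α] (S : Finset α)
    (𝓕 : Finset (Finset α)) : Prop :=
  (∀ A ∈ 𝓕, A ⊆ S) ∧ (∅ ∈ 𝓕) ∧ (S ∈ 𝓕) ∧
  (∀ x ∈ S, ∃ A ∈ 𝓕, ∃ B ∈ 𝓕, A \ B = {x}) ∧
  (∀ A ∈ 𝓕, ∀ B ∈ 𝓕, A ∪ B ∈ 𝓕)

theorem stmt_11 :
    ∃ (S : Finset ℕ) (𝓕 : Finset (Finset ℕ)), S.Nonempty ∧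
      ReducedUnionClosed S 𝓕 ∧
      2 * (∑ A ∈ 𝓕, A.card) < 𝓕.card * S.card := by
  refine ⟨{0,1,2}, {∅, {0}, {1}, {0,1}, {0,1,2}}, ⟨0, by decide⟩, ?_, by decide⟩
  unfold ReducedUnionClosed
  decide
end

section
/- Let L be a finite lattice and for a ∈ L let 𝓙_a denote the set of irreducible filters of L that contain a. Then for all a, b ∈ L: a ≤ b if and only if 𝓙_a ⊆ 𝓙_b; in particular the map a ↦ 𝓙_a is injective. Moreover 𝓙_{a ⊓ b} = 𝓙_a ∩ 𝓙_b for all a, b ∈ L. -/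
/-- `F` is a filter of the lattice `L`: nonempty, upward closed and meet-closed. -/
def IsLatticeFilter {L : Type*} [Lattice L] (F : Set L) : Prop :=
  F.Nonempty ∧ (∀ a ∈ F, ∀ b, a ≤ b → b ∈ F) ∧ (∀ a ∈ F, ∀ b ∈ F, a ⊓ b ∈ F)

/-- `F` is an irreducible filter: whenever `F` is the intersection of a collection of
filters, `F` belongs to that collection. -/
def IsIrreducibleLatticeFilter {L : Type*} [Lattice L] (F : Set L) : Prop :=
  IsLatticeFilter F ∧
    ∀ 𝒮 : Set (Set L), (∀ G ∈ 𝒮, IsLatticeFilter G) → F = ⋂₀ 𝒮 → F ∈ 𝒮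

/-- `𝓙 a`: the set of irreducible filters of `L` containing `a`. -/
def irreducibleFiltersContaining {L : Type*} [Lattice L] (a : L) : Set (Set L) :=
  {F | IsIrreducibleLatticeFilter F ∧ a ∈ F}

lemma exists_irred_sep {L : Type*} [Lattice L] [Fintype L] {F : Set L} {x : L}
    (hF : IsLatticeFilter F) (hx : x ∉ F) :
    ∃ G, IsIrreducibleLatticeFilter G ∧ F ⊆ G ∧ x ∉ G := by
  set s : Set (Set L) := {G | IsLatticeFilter G ∧ F ⊆ G ∧ x ∉ G} with hs
  have hFs : F ∈ s := ⟨hF, subset_rfl, hx⟩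
  obtain ⟨G, hGs, hmax⟩ :=
    Set.Finite.exists_maximalFor (id : Set L → Set L) s (Set.toFinite s) ⟨F, hFs⟩
  obtain ⟨hGfil, hFG, hxG⟩ := hGs
  refine ⟨G, ⟨hGfil, ?_⟩, hFG, hxG⟩
  intro 𝒮 h𝒮 hGeq
  by_contra hGnot
  apply hxG
  rw [hGeq]
  intro H hH
  have hGH : G ⊆ H := hGeq ▸ Set.sInter_subset_of_mem hH
  by_contra hxH
  have hHs : H ∈ s := ⟨h𝒮 H hH, hFG.trans hGH, hxH⟩
  have : G = H := hGH.antisymm (hmax hHs hGH)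
  exact hGnot (this ▸ hH)

lemma Ici_filter {L : Type*} [Lattice L] (a : L) : IsLatticeFilter (Set.Ici a) :=
  ⟨⟨a, le_refl a⟩, fun _ h _ h' => le_trans h h', fun _ h _ h' => le_inf h h'⟩

theorem stmt_15 {L : Type*} [Lattice L] [Fintype L] [Nontrivial L] :
    (∀ a b : L, a ≤ b ↔
        irreducibleFiltersContaining a ⊆ irreducibleFiltersContaining b) ∧
    Function.Injective (irreducibleFiltersContaining : L → Set (Set L)) ∧
    (∀ a b : L, irreducibleFiltersContaining (a ⊓ b) =
        irreducibleFiltersContaining a ∩ irreducibleFiltersContaining b) := by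
  have key : ∀ a b : L, a ≤ b ↔
      irreducibleFiltersContaining a ⊆ irreducibleFiltersContaining b := by
    intro a b
    constructor
    · rintro hab G ⟨hG, haG⟩
      exact ⟨hG, hG.1.2.1 a haG b hab⟩
    · intro hsub
      by_contra hab
      have hb : b ∉ Set.Ici a := hab
      obtain ⟨G, hGirr, hFG, hbG⟩ := exists_irred_sep (Ici_filter a) hb
      exact hbG (hsub ⟨hGirr, hFG (le_refl a)⟩).2
  refine ⟨key, ?_, ?_⟩
  · intro a b h
    exact le_antisymm ((key a b).2 h.subset) ((key b a).2 h.superset)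
  · intro a b
    ext G
    constructor
    · rintro ⟨hG, hab⟩
      exact ⟨⟨hG, hG.1.2.1 _ hab a inf_le_left⟩, ⟨hG, hG.1.2.1 _ hab b inf_le_right⟩⟩
    · rintro ⟨⟨hG, ha⟩, ⟨_, hb⟩⟩
      exact ⟨hG, hG.1.2.2 a ha b hb⟩
end
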